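/- Fix n ≥ 2, α ∈ (0,n), and r > 0. First, the Riesz potential of the ball B_r(0) evaluated at the center satisfies v_{B_r(0)}(0) = (n ω_n / (n−α)) · r^{n−α}. Second, for every Lebesgue measurable set E ⊂ ℝⁿ with |E| = ω_n rⁿ and every x ∈ ℝⁿ, one has v_E(x) ≤ (n ω_n / (n−α)) · r^{n−α}. -/

import Mathlib

open MeasureTheory Metric Set Bornology

/-- The Riesz potential `v_E(x) = ∫_E |x-y|^{-α} dy` of a set `E ⊆ ℝⁿ`. -/
noncomputable def rieszPotential {n : ℕ} (α : ℝ) (E : Set (EuclideanSpace ℝ (Fin n)))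
    (x : EuclideanSpace ℝ (Fin n)) : ℝ :=
  ∫ y in E, ‖x - y‖ ^ (-α)

/-- `ω_k`: the Lebesgue measure of the unit ball in `ℝ^k`. -/
noncomputable def unitBallVol (k : ℕ) : ℝ :=
  (volume (ball (0 : EuclideanSpace ℝ (Fin k)) 1)).toReal

lemma unitBallVol_pos {n : ℕ} (hn : 2 ≤ n) : 0 < unitBallVol n := by
  haveI : Nonempty (Fin n) := ⟨⟨0, by omega⟩⟩
  exact ENNReal.toReal_pos (measure_ball_pos volume 0 one_pos).ne'
    (measure_ball_lt_top).ne

/-- Value and integrability of the Riesz kernel on a centered ball. -/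
lemma rieszKernel_ball (n : ℕ) (hn : 2 ≤ n) (α : ℝ) (hα₀ : 0 < α) (hα₁ : α < n)
    (r : ℝ) (hr : 0 < r) :
    IntegrableOn (fun y : EuclideanSpace ℝ (Fin n) => ‖y‖ ^ (-α))
      (ball (0 : EuclideanSpace ℝ (Fin n)) r) volume ∧
    ∫ y in ball (0 : EuclideanSpace ℝ (Fin n)) r, ‖y‖ ^ (-α)
      = (n * unitBallVol n / ((n : ℝ) - α)) * r ^ ((n : ℝ) - α) := by
  haveI : Nonempty (Fin n) := ⟨⟨0, by omega⟩⟩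
  set f : ℝ → ℝ := fun t => if t < r then t ^ (-α) else 0 with hf
  have hind : (fun y : EuclideanSpace ℝ (Fin n) => f ‖y‖)
      = (ball (0 : EuclideanSpace ℝ (Fin n)) r).indicator (fun y => ‖y‖ ^ (-α)) := by
    funext y
    by_cases h : ‖y‖ < r
    · rw [Set.indicator_of_mem (mem_ball_zero_iff.2 h)]
      simp [hf, h]
    · rw [Set.indicator_of_notMem (fun hy => h (mem_ball_zero_iff.1 hy))]
      simp [hf, h]
  have hd : Module.finrank ℝ (EuclideanSpace ℝ (Fin n)) = n := finrank_euclideanSpace_fin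
  have hn1 : (1 : ℕ) ≤ n := by omega
  have hc : ((n - 1 : ℕ) : ℝ) = (n : ℝ) - 1 := by
    push_cast [Nat.cast_sub hn1]; ring
  -- the one-dimensional radial integral
  have h1 : ∫ y in Ioi (0 : ℝ), y ^ (n - 1) • f y
      = r ^ ((n : ℝ) - α) / ((n : ℝ) - α) := by
    have e1 : (fun y : ℝ => y ^ (n - 1) • f y)
        = (Iio r).indicator (fun y => y ^ (n - 1) * y ^ (-α)) := by
      funext y
      by_cases h : y < r
      · rw [Set.indicator_of_mem (mem_Iio.2 h)]; simp [hf, h]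
      · rw [Set.indicator_of_notMem (fun hy => h (mem_Iio.1 hy))]; simp [hf, h]
    rw [e1, setIntegral_indicator measurableSet_Iio, Ioi_inter_Iio]
    have e2 : ∫ y in Ioo (0 : ℝ) r, y ^ (n - 1) * y ^ (-α)
        = ∫ y in Ioo (0 : ℝ) r, y ^ (((n - 1 : ℕ) : ℝ) + (-α)) := by
      refine setIntegral_congr_fun measurableSet_Ioo fun y hy => ?_
      rw [← Real.rpow_natCast y (n - 1), ← Real.rpow_add hy.1]
    rw [e2, ← integral_Ioc_eq_integral_Ioo,
      ← intervalIntegral.integral_of_le hr.le,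
      integral_rpow (Or.inl (by rw [hc]; linarith))]
    rw [hc]
    have h0 : (0 : ℝ) ^ ((n : ℝ) - 1 + -α + 1) = 0 :=
      Real.zero_rpow (by intro h; nlinarith)
    rw [h0]
    ring_nf
  have hpolar := integral_fun_norm_addHaar (volume : Measure (EuclideanSpace ℝ (Fin n))) f
  rw [hd, h1, hind, nsmul_eq_mul, smul_eq_mul,
    integral_indicator measurableSet_ball] at hpolar
  have hval : ∫ y in ball (0 : EuclideanSpace ℝ (Fin n)) r, ‖y‖ ^ (-α)
      = (n * unitBallVol n / ((n : ℝ) - α)) * r ^ ((n : ℝ) - α) := by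
    rw [hpolar, measureReal_def]; unfold unitBallVol; ring
  refine ⟨?_, hval⟩
  -- integrability: otherwise the integral would be zero, contradicting positivity
  by_contra hint
  rw [MeasureTheory.integral_undef hint] at hval
  have hpos : 0 < (n * unitBallVol n / ((n : ℝ) - α)) * r ^ ((n : ℝ) - α) := by
    apply mul_pos
    · apply div_pos
      · exact mul_pos (by exact_mod_cast (by omega : 0 < n)) (unitBallVol_pos hn)
      · linarith
    · exact Real.rpow_pos_of_pos hr _
  rw [← hval] at hpos
  exact lt_irrefl _ hpos

/-- The Riesz potential of the ball `B_r(0)` at its center equals `(n ω_n/(n−α)) r^{n−α}`, and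
for every measurable set `E` of measure `ω_n rⁿ` the Riesz potential is everywhere bounded by
this value. -/
theorem rieszPotential_ball_center_and_sup_bound
    (n : ℕ) (hn : 2 ≤ n) (α : ℝ) (hα₀ : 0 < α) (hα₁ : α < n) (r : ℝ) (hr : 0 < r) :
    rieszPotential α (ball (0 : EuclideanSpace ℝ (Fin n)) r) 0
        = (n * unitBallVol n / ((n : ℝ) - α)) * r ^ ((n : ℝ) - α) ∧
    ∀ E : Set (EuclideanSpace ℝ (Fin n)), MeasurableSet E →
      volume E = ENNReal.ofReal (unitBallVol n * r ^ n) →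
      ∀ x : EuclideanSpace ℝ (Fin n),
        rieszPotential α E x ≤ (n * unitBallVol n / ((n : ℝ) - α)) * r ^ ((n : ℝ) - α) := by
  haveI : Nonempty (Fin n) := ⟨⟨0, by omega⟩⟩
  obtain ⟨hIball, hVball⟩ := rieszKernel_ball n hn α hα₀ hα₁ r hr
  have hd : Module.finrank ℝ (EuclideanSpace ℝ (Fin n)) = n := finrank_euclideanSpace_fin
  constructor
  · unfold rieszPotential
    simp only [zero_sub, norm_neg]
    exact hVball
  intro E hE hvol x
  set g : EuclideanSpace ℝ (Fin n) → ℝ := fun y => ‖x - y‖ ^ (-α) with hg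
  have hg0 : ∀ y, 0 ≤ g y := fun y => Real.rpow_nonneg (norm_nonneg _) _
  set B : Set (EuclideanSpace ℝ (Fin n)) := ball x r with hB
  -- translation: relate integrals over B to the centered ball
  set h : EuclideanSpace ℝ (Fin n) → ℝ :=
    (ball (0 : EuclideanSpace ℝ (Fin n)) r).indicator (fun y => ‖y‖ ^ (-α)) with hh
  have hkey : ∀ t, h (x - t) = B.indicator g t := by
    intro t
    by_cases ht : t ∈ B
    · have : x - t ∈ ball (0 : EuclideanSpace ℝ (Fin n)) r := by
        rw [mem_ball_zero_iff]
        exact mem_ball_iff_norm'.1 ht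
      simp only [hh, hg, Set.indicator_of_mem this, Set.indicator_of_mem ht]
    · have : x - t ∉ ball (0 : EuclideanSpace ℝ (Fin n)) r := by
        rw [mem_ball_zero_iff]
        exact fun hc => ht (mem_ball_iff_norm'.2 hc)
      simp only [hh, Set.indicator_of_notMem this, Set.indicator_of_notMem ht]
  have hhint : Integrable h volume :=
    (integrable_indicator_iff measurableSet_ball).2 hIball
  have hgB_int : IntegrableOn g B volume := by
    rw [← integrable_indicator_iff measurableSet_ball]
    have := hhint.comp_sub_left x
    simpa only [hkey] using this
  have hintB : ∫ y in B, g y = (n * unitBallVol n / ((n : ℝ) - α)) * r ^ ((n : ℝ) - α) := by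
    rw [← integral_indicator measurableSet_ball]
    calc ∫ t, B.indicator g t = ∫ t, h (x - t) := by simp_rw [hkey]
      _ = ∫ t, h t := integral_sub_left_eq_self h volume x
      _ = ∫ y in ball (0 : EuclideanSpace ℝ (Fin n)) r, ‖y‖ ^ (-α) :=
          integral_indicator measurableSet_ball
      _ = _ := hVball
  by_cases hgE : IntegrableOn g E volume
  · -- measure identities
    have hvolB : volume B = volume E := by
      rw [hvol, Measure.addHaar_ball volume x hr.le, hd,
        ENNReal.ofReal_mul (le_of_lt (unitBallVol_pos hn))]
      unfold unitBallVol
      rw [ENNReal.ofReal_toReal (measure_ball_lt_top).ne, mul_comm]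
    have hfin : volume (E ∩ B) ≠ ⊤ :=
      (lt_of_le_of_lt (measure_mono inter_subset_right) measure_ball_lt_top).ne
    have hEB : volume (E \ B) = volume (B \ E) := by
      have h1 := measure_inter_add_diff (μ := volume) E
        (measurableSet_ball : MeasurableSet B)
      have h2 := measure_inter_add_diff (μ := volume) B hE
      rw [inter_comm B E] at h2
      have h3 : volume (E ∩ B) + volume (E \ B) = volume (E ∩ B) + volume (B \ E) := by
        rw [h1, h2, hvolB]
      exact (ENNReal.add_right_inj hfin).1 h3
    have hBEfin : volume (B \ E) ≠ ⊤ :=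
      (lt_of_le_of_lt (measure_mono diff_subset) measure_ball_lt_top).ne
    have hEBfin : volume (E \ B) ≠ ⊤ := by rw [hEB]; exact hBEfin
    have hub : ∫ y in E \ B, g y ≤ (volume (E \ B)).toReal • (r ^ (-α)) := by
      rw [← measureReal_def, ← setIntegral_const]
      refine setIntegral_mono_on (hgE.mono_set diff_subset)
        (integrableOn_const hEBfin)
        (hE.diff measurableSet_ball) ?_
      intro y hy
      have hry : r ≤ ‖x - y‖ := by
        have h4 := hy.2
        rw [hB, mem_ball, not_lt, dist_comm, dist_eq_norm] at h4
        exact h4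
      exact Real.rpow_le_rpow_of_nonpos hr hry (neg_nonpos.2 hα₀.le)
    have hlb : (volume (B \ E)).toReal • (r ^ (-α)) ≤ ∫ y in B \ E, g y := by
      rw [← measureReal_def, ← setIntegral_const]
      refine setIntegral_mono_on_ae
        (integrableOn_const hBEfin)
        (hgB_int.mono_set diff_subset) (measurableSet_ball.diff hE) ?_
      have hxae : ∀ᵐ y : EuclideanSpace ℝ (Fin n) ∂volume, y ≠ x := by
        rw [ae_iff]
        simp [measure_singleton x]
      filter_upwards [hxae] with y hyx hy
      have h5 : 0 < ‖x - y‖ := by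
        rw [norm_pos_iff, sub_ne_zero]
        exact fun hc => hyx hc.symm
      have h6 : ‖x - y‖ ≤ r := by
        have h7 := hy.1
        rw [hB, mem_ball, dist_comm, dist_eq_norm] at h7
        exact h7.le
      exact Real.rpow_le_rpow_of_nonpos h5 h6 (neg_nonpos.2 hα₀.le)
    unfold rieszPotential
    calc ∫ y in E, ‖x - y‖ ^ (-α)
        = (∫ y in E ∩ B, g y) + ∫ y in E \ B, g y :=
          (integral_inter_add_diff measurableSet_ball hgE).symm
      _ ≤ (∫ y in E ∩ B, g y) + (volume (E \ B)).toReal • (r ^ (-α)) :=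
          add_le_add_right hub _
      _ = (∫ y in B ∩ E, g y) + (volume (B \ E)).toReal • (r ^ (-α)) := by
          rw [inter_comm, hEB]
      _ ≤ (∫ y in B ∩ E, g y) + ∫ y in B \ E, g y := add_le_add_right hlb _
      _ = ∫ y in B, g y := integral_inter_add_diff hE hgB_int
      _ = _ := hintB
  · unfold rieszPotential
    rw [MeasureTheory.integral_undef hgE]
    apply mul_nonneg
    · apply div_nonneg
      · exact mul_nonneg (Nat.cast_nonneg n) (unitBallVol_pos hn).le
      · linarith
    · exact Real.rpow_nonneg hr.le _
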